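/- Let K > 0 and Φ_0 ∈ ℝ^d. There exists a constant C > 0 depending only on Φ_0, σ, and K (and not on c) such that for every c > 0, every measurable Θ : [0, T] → ℝ^d with sup_{0≤t≤T} ‖Θ_t‖ ≤ K, and every t ∈ [0, T], one has ‖ Φ_0 · exp(−c t σ) + c · ∫_0^t Θ_v σ · exp(c(v−t)σ) dv ‖ ≤ C. -/

import Mathlib

open MeasureTheory Matrix Filter

noncomputable section

/-- Euclidean norm on row vectors in `ℝ^d`. -/
def euclNorm {d : ℕ} (x : Fin d → ℝ) : ℝ := Real.sqrt (∑ i, (x i) ^ 2)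

/-- The explicit solution `Φ_t = Φ₀·exp(−ctσ) + c·∫_0^t Θ_v σ·exp(c(v−t)σ) dv`
of the linear ODE `Φ' = c(Θ − Φ)σ`. -/
def PhiSol {d : ℕ} (σ : Matrix (Fin d) (Fin d) ℝ) (c : ℝ) (Φ₀ : Fin d → ℝ)
    (Θ : ℝ → Fin d → ℝ) (t : ℝ) : Fin d → ℝ :=
  Φ₀ ᵥ* NormedSpace.exp ((-(c * t)) • σ) +
    c • ∫ v in (0 : ℝ)..t, (Θ v ᵥ* σ) ᵥ* NormedSpace.exp ((c * (v - t)) • σ)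

namespace Stmt18Aux

variable {d : ℕ}

lemma euclNorm_nonneg (x : Fin d → ℝ) : 0 ≤ euclNorm x := Real.sqrt_nonneg _

lemma euclNorm_dot (x : Fin d → ℝ) : euclNorm x = Real.sqrt (x ⬝ᵥ x) := by
  simp [euclNorm, dotProduct, sq]

lemma euclNorm_vecMul_unitary {U : Matrix (Fin d) (Fin d) ℝ}
    (hU : U * star U = 1) (x : Fin d → ℝ) : euclNorm (x ᵥ* U) = euclNorm x := by
  have hUt : U * Uᵀ = 1 := by
    simpa [Matrix.star_eq_conjTranspose, Matrix.conjTranspose_eq_transpose_of_trivial] using hU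
  have key : (x ᵥ* U) ⬝ᵥ (x ᵥ* U) = x ⬝ᵥ x := by
    have h3 : ((x ᵥ* U) ᵥ* Uᵀ) ⬝ᵥ x = (x ᵥ* U) ⬝ᵥ (x ᵥ* U) := by
      rw [← Matrix.dotProduct_mulVec, Matrix.mulVec_transpose]
    rw [← h3, Matrix.vecMul_vecMul, hUt, Matrix.vecMul_one]
  rw [euclNorm_dot, euclNorm_dot, key]

lemma euclNorm_vecMul_diagonal_le {v : Fin d → ℝ} {b : ℝ} (hb : 0 ≤ b)
    (h : ∀ i, |v i| ≤ b) (x : Fin d → ℝ) :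
    euclNorm (x ᵥ* Matrix.diagonal v) ≤ b * euclNorm x := by
  have h1 : euclNorm (x ᵥ* Matrix.diagonal v) = Real.sqrt (∑ j, (x j * v j) ^ 2) := by
    simp [euclNorm, Matrix.vecMul_diagonal]
  rw [h1]
  have h2 : ∑ j, (x j * v j) ^ 2 ≤ b ^ 2 * ∑ j, (x j) ^ 2 := by
    rw [Finset.mul_sum]
    refine Finset.sum_le_sum fun j _ => ?_
    have hv : v j ^ 2 ≤ b ^ 2 := by
      have := pow_le_pow_left₀ (abs_nonneg (v j)) (h j) 2
      simpa [sq_abs] using this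
    nlinarith [sq_nonneg (x j)]
  calc Real.sqrt (∑ j, (x j * v j) ^ 2) ≤ Real.sqrt (b ^ 2 * ∑ j, (x j) ^ 2) :=
        Real.sqrt_le_sqrt h2
    _ = b * euclNorm x := by
        rw [Real.sqrt_mul (by positivity), Real.sqrt_sq hb]; rfl

lemma euclNorm_conj_le {U : Matrix (Fin d) (Fin d) ℝ}
    (hU : U ∈ unitary (Matrix (Fin d) (Fin d) ℝ)) {v : Fin d → ℝ} {b : ℝ} (hb : 0 ≤ b)
    (h : ∀ i, |v i| ≤ b) (x : Fin d → ℝ) :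
    euclNorm (x ᵥ* (U * Matrix.diagonal v * star U)) ≤ b * euclNorm x := by
  have hU1 : U * star U = 1 := (Unitary.mem_iff.mp hU).2
  have hU2 : star U * star (star U) = 1 := by
    simpa using (Unitary.mem_iff.mp hU).1
  rw [← Matrix.vecMul_vecMul, ← Matrix.vecMul_vecMul, euclNorm_vecMul_unitary hU2]
  calc euclNorm ((x ᵥ* U) ᵥ* Matrix.diagonal v) ≤ b * euclNorm (x ᵥ* U) :=
        euclNorm_vecMul_diagonal_le hb h _
    _ = b * euclNorm x := by rw [euclNorm_vecMul_unitary hU1]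

lemma spectral (σ : Matrix (Fin d) (Fin d) ℝ) (hσ : σ.PosDef) :
    ∃ (lam : Fin d → ℝ) (U : Matrix (Fin d) (Fin d) ℝ),
      (∀ i, 0 < lam i) ∧ U ∈ unitary (Matrix (Fin d) (Fin d) ℝ) ∧
      σ = U * Matrix.diagonal lam * star U ∧
      ∀ s : ℝ, NormedSpace.exp (s • σ) =
        U * Matrix.diagonal (fun i => Real.exp (s * lam i)) * star U := by
  have hσeq : σ = (hσ.1.eigenvectorUnitary : Matrix (Fin d) (Fin d) ℝ) *
      Matrix.diagonal (hσ.1.eigenvalues) *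
      star (hσ.1.eigenvectorUnitary : Matrix (Fin d) (Fin d) ℝ) := by
    have h := hσ.1.spectral_theorem
    simpa [RCLike.ofReal_real_eq_id, Function.id_comp] using h
  refine ⟨hσ.1.eigenvalues, ↑(hσ.1.eigenvectorUnitary), hσ.eigenvalues_pos,
    (hσ.1.eigenvectorUnitary).2, hσeq, ?_⟩
  intro s
  set Uu : (Matrix (Fin d) (Fin d) ℝ)ˣ := Unitary.toUnits hσ.1.eigenvectorUnitary with hUu
  have hcoe : (↑Uu : Matrix (Fin d) (Fin d) ℝ) = ↑(hσ.1.eigenvectorUnitary) := rfl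
  have hinv : (↑Uu⁻¹ : Matrix (Fin d) (Fin d) ℝ) =
      star (hσ.1.eigenvectorUnitary : Matrix (Fin d) (Fin d) ℝ) := rfl
  have h1 : s • σ = (↑Uu : Matrix (Fin d) (Fin d) ℝ) *
      Matrix.diagonal (fun i => s * hσ.1.eigenvalues i) * (↑Uu⁻¹ : Matrix (Fin d) (Fin d) ℝ) := by
    rw [hcoe, hinv]
    refine (congrArg (fun M => s • M) hσeq).trans ?_
    rw [← Matrix.smul_mul, ← Matrix.mul_smul]
    congr 2
    rw [← Matrix.diagonal_smul]
    rfl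
  rw [h1, Matrix.exp_units_conj Uu, Matrix.exp_diagonal, hcoe, hinv, Pi.exp_def]
  simp [Real.exp_eq_exp_ℝ]

lemma integral_exp_eval {lam c : ℝ} (t : ℝ) (hlam : 0 < lam) (hc : 0 < c) :
    ∫ v in (0:ℝ)..t, lam * Real.exp (c * (v - t) * lam)
      = lam * Real.exp (-(c * lam * t)) * ((Real.exp (c * lam * t) - 1) / (c * lam)) := by
  have ha : (0:ℝ) < c * lam := mul_pos hc hlam
  have h1 : ∀ v ∈ Set.uIcc (0:ℝ) t, lam * Real.exp (c * (v - t) * lam)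
      = (lam * Real.exp (-(c * lam * t))) * Real.exp (c * lam * v) := by
    intro v _
    rw [show c * (v - t) * lam = c * lam * v + -(c * lam * t) by ring, Real.exp_add]
    ring
  rw [intervalIntegral.integral_congr h1, intervalIntegral.integral_const_mul]
  congr 1
  have h2 := intervalIntegral.mul_integral_comp_mul_left (f := Real.exp)
    (c := c * lam) (a := (0:ℝ)) (b := t)
  rw [mul_zero, integral_exp, Real.exp_zero] at h2
  rw [eq_div_iff ha.ne']
  linarith [h2]

lemma integral_exp_bound {lam c : ℝ} {t : ℝ} (hlam : 0 < lam) (hc : 0 < c) :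
    c * ∫ v in (0:ℝ)..t, lam * Real.exp (c * (v - t) * lam) ≤ 1 := by
  rw [integral_exp_eval t hlam hc]
  have ha : (0:ℝ) < c * lam := mul_pos hc hlam
  have h3 : Real.exp (-(c * lam * t)) * Real.exp (c * lam * t) = 1 := by
    rw [← Real.exp_add]; simp
  have h4 : (0:ℝ) < Real.exp (-(c * lam * t)) := Real.exp_pos _
  have h5 : c * (lam * Real.exp (-(c * lam * t)) * ((Real.exp (c * lam * t) - 1) / (c * lam)))
      = 1 - Real.exp (-(c * lam * t)) := by
    field_simp
    nlinarith [h3]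
  rw [h5]
  linarith [h4]

lemma integral_exp_nonneg {lam c : ℝ} {t : ℝ} (hlam : 0 < lam) (ht : 0 ≤ t) :
    0 ≤ ∫ v in (0:ℝ)..t, lam * Real.exp (c * (v - t) * lam) :=
  intervalIntegral.integral_nonneg ht fun _ _ =>
    le_of_lt (mul_pos hlam (Real.exp_pos _))

lemma euclNorm_eq (x : Fin d → ℝ) :
    euclNorm x = ‖(EuclideanSpace.equiv (Fin d) ℝ).symm x‖ := by
  rw [EuclideanSpace.norm_eq]
  simp [euclNorm, sq_abs]

lemma euclNorm_add_le (x y : Fin d → ℝ) :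
    euclNorm (x + y) ≤ euclNorm x + euclNorm y := by
  simp only [euclNorm_eq, map_add]
  exact norm_add_le _ _

lemma euclNorm_smul (c : ℝ) (x : Fin d → ℝ) :
    euclNorm (c • x) = |c| * euclNorm x := by
  simp only [euclNorm_eq, _root_.map_smul, norm_smul, Real.norm_eq_abs]

lemma map_intervalIntegral (f : ℝ → Fin d → ℝ) (a b : ℝ) :
    (EuclideanSpace.equiv (Fin d) ℝ).symm (∫ v in a..b, f v) =
      ∫ v in a..b, (EuclideanSpace.equiv (Fin d) ℝ).symm (f v) := by
  simp only [intervalIntegral, map_sub]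
  rw [ContinuousLinearEquiv.integral_comp_comm, ContinuousLinearEquiv.integral_comp_comm]

end Stmt18Aux

open Stmt18Aux

/-- Uniform (in `c`) bound: there is `C > 0` depending only on `Φ₀`, `σ`, `K` such
that for all `c > 0` and all measurable `Θ` bounded by `K` on `[0,T]`, the explicit
solution is bounded by `C` on `[0,T]`. -/
theorem stmt18 (T : ℝ) (hT : 0 < T) {d : ℕ} (hd : 1 ≤ d)
    (σ : Matrix (Fin d) (Fin d) ℝ) (hσ : σ.PosDef)
    (K : ℝ) (hK : 0 < K) (Φ₀ : Fin d → ℝ) :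
    ∃ C : ℝ, 0 < C ∧
      ∀ c : ℝ, 0 < c → ∀ Θ : ℝ → Fin d → ℝ, Measurable Θ →
        (∀ t ∈ Set.Icc (0 : ℝ) T, euclNorm (Θ t) ≤ K) →
        ∀ t ∈ Set.Icc (0 : ℝ) T, euclNorm (PhiSol σ c Φ₀ Θ t) ≤ C := by
  obtain ⟨lam, U, hlam, hU, hσeq, hexp⟩ := Stmt18Aux.spectral σ hσ
  refine ⟨euclNorm Φ₀ + K * d + 1, by
    have := euclNorm_nonneg Φ₀
    have hd' : (1:ℝ) ≤ (d:ℝ) := by exact_mod_cast hd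
    nlinarith, ?_⟩
  intro c hc Θ hΘm hΘb t ht
  obtain ⟨ht0, htT⟩ := ht
  -- Term 1
  have hterm1 : euclNorm (Φ₀ ᵥ* NormedSpace.exp ((-(c * t)) • σ)) ≤ euclNorm Φ₀ := by
    rw [hexp (-(c * t))]
    have h := euclNorm_conj_le hU (b := 1) zero_le_one (fun i => by
      rw [abs_of_pos (Real.exp_pos _)]
      refine Real.exp_le_one_iff.mpr ?_
      have hct : -(c * t) ≤ 0 := by nlinarith
      exact mul_nonpos_of_nonpos_of_nonneg hct (hlam i).le) Φ₀
    simpa using h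
  -- Term 2
  set f : ℝ → Fin d → ℝ :=
    fun v => (Θ v ᵥ* σ) ᵥ* NormedSpace.exp ((c * (v - t)) • σ) with hf
  set g : ℝ → ℝ :=
    fun v => (∑ i, lam i * Real.exp (c * (v - t) * lam i)) * K with hg
  have hstarU : star U * U = 1 := (Unitary.mem_iff.mp hU).1
  -- pointwise bound
  have hpt : ∀ v ∈ Set.uIoc (0:ℝ) t, euclNorm (f v) ≤ g v := by
    intro v hv
    rw [Set.uIoc_of_le ht0] at hv
    have hvIcc : v ∈ Set.Icc (0:ℝ) T := ⟨hv.1.le, hv.2.trans htT⟩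
    have hmul : σ * NormedSpace.exp ((c * (v - t)) • σ) =
        U * Matrix.diagonal (fun i => lam i * Real.exp (c * (v - t) * lam i)) * star U := by
      rw [hexp (c * (v - t))]
      conv_lhs => rw [hσeq]
      set A : Matrix (Fin d) (Fin d) ℝ := Matrix.diagonal lam with hA
      set B : Matrix (Fin d) (Fin d) ℝ :=
        Matrix.diagonal (fun i => Real.exp (c * (v - t) * lam i)) with hB
      rw [mul_assoc (U * A) (star U) (U * B * star U),
        ← mul_assoc (star U) (U * B) (star U), ← mul_assoc (star U) U B, hstarU, one_mul,
        ← mul_assoc (U * A) B (star U), mul_assoc U A B, hA, hB,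
        Matrix.diagonal_mul_diagonal]
    have hb0 : (0:ℝ) ≤ ∑ i, lam i * Real.exp (c * (v - t) * lam i) :=
      Finset.sum_nonneg fun i _ => le_of_lt (mul_pos (hlam i) (Real.exp_pos _))
    have habs : ∀ i, |lam i * Real.exp (c * (v - t) * lam i)|
        ≤ ∑ j, lam j * Real.exp (c * (v - t) * lam j) := by
      intro i
      rw [abs_of_pos (mul_pos (hlam i) (Real.exp_pos _))]
      exact Finset.single_le_sum
        (f := fun j => lam j * Real.exp (c * (v - t) * lam j))
        (fun j _ => le_of_lt (mul_pos (hlam j) (Real.exp_pos _))) (Finset.mem_univ i)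
    have h1 : euclNorm (f v) ≤ (∑ i, lam i * Real.exp (c * (v - t) * lam i)) * euclNorm (Θ v) := by
      rw [hf]
      simp only
      rw [Matrix.vecMul_vecMul, hmul]
      exact euclNorm_conj_le hU hb0 habs (Θ v)
    calc euclNorm (f v) ≤ (∑ i, lam i * Real.exp (c * (v - t) * lam i)) * euclNorm (Θ v) := h1
      _ ≤ (∑ i, lam i * Real.exp (c * (v - t) * lam i)) * K :=
          mul_le_mul_of_nonneg_left (hΘb v hvIcc) hb0
      _ = g v := rfl
  -- integrability of the bound
  have hicont : ∀ i : Fin d, Continuous fun v => lam i * Real.exp (c * (v - t) * lam i) := by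
    intro i
    exact continuous_const.mul (Real.continuous_exp.comp (by fun_prop))
  have hgcont : Continuous g := by
    rw [hg]
    exact (continuous_finset_sum _ fun i _ => hicont i).mul continuous_const
  have hgint : IntervalIntegrable g volume 0 t := hgcont.intervalIntegrable 0 t
  -- norm of the integral
  have hnorm : euclNorm (∫ v in (0:ℝ)..t, f v) ≤ |∫ v in (0:ℝ)..t, g v| := by
    rw [euclNorm_eq, map_intervalIntegral]
    refine (intervalIntegral.norm_integral_le_of_norm_le ht0 ?_ hgint).trans (le_abs_self _)
    refine Filter.Eventually.of_forall fun v hv => ?_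
    rw [← euclNorm_eq]
    exact hpt v (by rwa [Set.uIoc_of_le ht0])
  -- compute and bound the integral of g
  have hsplit : ∫ v in (0:ℝ)..t, g v
      = (∑ i, ∫ v in (0:ℝ)..t, lam i * Real.exp (c * (v - t) * lam i)) * K := by
    rw [hg]
    simp only
    rw [intervalIntegral.integral_mul_const]
    congr 1
    exact intervalIntegral.integral_finset_sum fun i _ => (hicont i).intervalIntegrable 0 t
  have hInn : 0 ≤ ∫ v in (0:ℝ)..t, g v := by
    rw [hsplit]
    exact mul_nonneg (Finset.sum_nonneg fun i _ => integral_exp_nonneg (hlam i) ht0) hK.le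
  have hsum_le : c * ∫ v in (0:ℝ)..t, g v ≤ K * d := by
    rw [hsplit]
    have h1 : ∀ i ∈ (Finset.univ : Finset (Fin d)),
        c * ∫ v in (0:ℝ)..t, lam i * Real.exp (c * (v - t) * lam i) ≤ 1 :=
      fun i _ => integral_exp_bound (hlam i) hc
    calc c * ((∑ i, ∫ v in (0:ℝ)..t, lam i * Real.exp (c * (v - t) * lam i)) * K)
        = (∑ i : Fin d, c * ∫ v in (0:ℝ)..t, lam i * Real.exp (c * (v - t) * lam i)) * K := by
          rw [← mul_assoc, Finset.mul_sum]
      _ ≤ (∑ _i : Fin d, (1:ℝ)) * K :=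
          mul_le_mul_of_nonneg_right (Finset.sum_le_sum h1) hK.le
      _ = (d : ℝ) * K := by simp
      _ = K * d := mul_comm _ _
  have hterm2 : euclNorm (c • ∫ v in (0:ℝ)..t, f v) ≤ K * d := by
    rw [euclNorm_smul, abs_of_pos hc]
    calc c * euclNorm (∫ v in (0:ℝ)..t, f v) ≤ c * |∫ v in (0:ℝ)..t, g v| :=
          mul_le_mul_of_nonneg_left hnorm hc.le
      _ = c * ∫ v in (0:ℝ)..t, g v := by rw [abs_of_nonneg hInn]
      _ ≤ K * d := hsum_le
  have hPhi : PhiSol σ c Φ₀ Θ t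
      = Φ₀ ᵥ* NormedSpace.exp ((-(c * t)) • σ) + c • ∫ v in (0:ℝ)..t, f v := rfl
  rw [hPhi]
  have hadd := euclNorm_add_le (Φ₀ ᵥ* NormedSpace.exp ((-(c * t)) • σ))
      (c • ∫ v in (0:ℝ)..t, f v)
  linarith

end
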